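/- Let Σ and V be nonempty finite sets, let (W, 𝒲, P) be a probability space, and let g : W → (Σ^V → Σ^V) be such that for every w ∈ W there are a subset Λ_w ⊆ V and a function f_w : Σ^{Λ_w} → Σ^V with g(w)(x) = f_w(x|_{Λ_w}) for all x ∈ Σ^V; assume w ↦ g(w) and w ↦ Λ_w are measurable (the target sets being finite, equipped with the discrete σ-algebra). Then for any probability distributions φ and ψ on Σ^V, ‖ ∫ (g(w))_*φ dP(w) − ∫ (g(w))_*ψ dP(w) ‖_TV ≤ ∫ ‖ φ|_{Λ_w} − ψ|_{Λ_w} ‖_TV dP(w). -/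

import Mathlib

noncomputable section
open MeasureTheory

section Aux
variable {S V : Type*} [Fintype S] [Fintype V] [Nonempty S] [DecidableEq S] [DecidableEq V]

lemma sum_restrict_eq (L : Finset V) (a : (V → S) → ℝ) :
    ∑ η : {v // v ∈ L} → S, ∑ x : V → S,
      (if (∀ v : {v // v ∈ L}, x v.1 = η v) then a x else 0) = ∑ x : V → S, a x := by
  classical
  rw [Finset.sum_comm]
  refine Finset.sum_congr rfl fun x _ => ?_
  have key : ∀ η : {v // v ∈ L} → S,
      (∀ v : {v // v ∈ L}, x v.1 = η v) ↔ η = fun v => x v.1 := by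
    intro η
    constructor
    · intro h; funext v; exact (h v).symm
    · intro h v; rw [h]
  simp only [key]
  simp

lemma rhs_bound (L : Finset V) (d : (V → S) → ℝ) :
    ∑ η : {v // v ∈ L} → S,
        |∑ x : V → S, if (∀ v : {v // v ∈ L}, x v.1 = η v) then d x else 0|
      ≤ ∑ x : V → S, |d x| := by
  classical
  calc ∑ η : {v // v ∈ L} → S,
        |∑ x : V → S, if (∀ v : {v // v ∈ L}, x v.1 = η v) then d x else 0|
      ≤ ∑ η : {v // v ∈ L} → S, ∑ x : V → S,
        |if (∀ v : {v // v ∈ L}, x v.1 = η v) then d x else 0| :=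
      Finset.sum_le_sum fun η _ => Finset.abs_sum_le_sum_abs _ _
    _ = ∑ η : {v // v ∈ L} → S, ∑ x : V → S,
        (if (∀ v : {v // v ∈ L}, x v.1 = η v) then |d x| else 0) := by
      refine Finset.sum_congr rfl fun η _ => Finset.sum_congr rfl fun x _ => ?_
      split <;> simp
    _ = ∑ x : V → S, |d x| := sum_restrict_eq L _

lemma pointwise (G : (V → S) → (V → S)) (L : Finset V)
    (hs : ∀ x y : V → S, (∀ v ∈ L, x v = y v) → G x = G y)
    (d : (V → S) → ℝ) :
    ∑ z : V → S, |∑ x : V → S, if G x = z then d x else 0| ≤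
      ∑ η : {v // v ∈ L} → S,
        |∑ x : V → S, if (∀ v : {v // v ∈ L}, x v.1 = η v) then d x else 0| := by
  classical
  set e : ({v // v ∈ L} → S) → (V → S) :=
    fun η v => if h : v ∈ L then η ⟨v, h⟩ else Classical.arbitrary S with he
  have hGx : ∀ x : V → S, G x = G (e fun v => x v.1) := by
    intro x
    apply hs
    intro v hv
    simp [he, hv]
  have key : ∀ z : V → S,
      (∑ x : V → S, if G x = z then d x else 0) =
      ∑ η : {v // v ∈ L} → S,
        if G (e η) = z then
          (∑ x : V → S, if (∀ v : {v // v ∈ L}, x v.1 = η v) then d x else 0) else 0 := by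
    intro z
    have step : ∀ η : {v // v ∈ L} → S, (if G (e η) = z then
          (∑ x : V → S, if (∀ v : {v // v ∈ L}, x v.1 = η v) then d x else 0) else 0)
        = ∑ x : V → S,
            if ((∀ v : {v // v ∈ L}, x v.1 = η v) ∧ G (e η) = z) then d x else 0 := by
      intro η
      split
      · next h => exact Finset.sum_congr rfl fun x _ => by simp [h]
      · next h => simp [h]
    simp only [step]
    rw [Finset.sum_comm]
    refine Finset.sum_congr rfl fun x _ => ?_
    have hiff : ∀ η : {v // v ∈ L} → S,
        ((∀ v : {v // v ∈ L}, x v.1 = η v) ∧ G (e η) = z) ↔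
          (η = fun v => x v.1) ∧ G x = z := by
      intro η
      constructor
      · rintro ⟨h1, h2⟩
        have hη : η = fun v => x v.1 := funext fun v => (h1 v).symm
        subst hη
        exact ⟨rfl, by rw [hGx x]; exact h2⟩
      · rintro ⟨h1, h2⟩
        subst h1
        exact ⟨fun v => rfl, by rw [← hGx x]; exact h2⟩
    simp only [hiff]
    by_cases hz : G x = z
    · simp [hz]
    · simp [hz]
  calc ∑ z : V → S, |∑ x : V → S, if G x = z then d x else 0|
      = ∑ z : V → S, |∑ η : {v // v ∈ L} → S, if G (e η) = z then
          (∑ x : V → S, if (∀ v : {v // v ∈ L}, x v.1 = η v) then d x else 0) else 0| := by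
        simp only [key]
    _ ≤ ∑ z : V → S, ∑ η : {v // v ∈ L} → S, |if G (e η) = z then
          (∑ x : V → S, if (∀ v : {v // v ∈ L}, x v.1 = η v) then d x else 0) else 0| :=
        Finset.sum_le_sum fun z _ => Finset.abs_sum_le_sum_abs _ _
    _ = ∑ η : {v // v ∈ L} → S, ∑ z : V → S, if G (e η) = z then
          |∑ x : V → S, if (∀ v : {v // v ∈ L}, x v.1 = η v) then d x else 0| else 0 := by
        rw [Finset.sum_comm]
        exact Finset.sum_congr rfl fun η _ => Finset.sum_congr rfl fun z _ => by
          split <;> simp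
    _ = _ := by
        refine Finset.sum_congr rfl fun η _ => ?_
        simp

end Aux


noncomputable section
open MeasureTheory

set_option maxHeartbeats 1000000 in
theorem stmt_4 {W : Type*} [MeasurableSpace W] (P : Measure W) [IsProbabilityMeasure P]
    {S V : Type*} [Fintype S] [Fintype V] [Nonempty S] [Nonempty V]
    [DecidableEq S] [DecidableEq V]
    (g : W → (V → S) → (V → S)) (Λ : W → Finset V)
    (hg : @Measurable W ((V → S) → (V → S)) _ ⊤ g)
    (hΛ : @Measurable W (Finset V) _ ⊤ Λ)
    (hsupp : ∀ w, ∀ x y : V → S, (∀ v ∈ Λ w, x v = y v) → g w x = g w y)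
    (φ ψ : (V → S) → ℝ)
    (hφ0 : ∀ x, 0 ≤ φ x) (hφ1 : ∑ x, φ x = 1)
    (hψ0 : ∀ x, 0 ≤ ψ x) (hψ1 : ∑ x, ψ x = 1) :
    (1 / 2) * ∑ z : V → S,
        |(∫ w, (∑ x : V → S, if g w x = z then φ x else 0) ∂P) -
          (∫ w, (∑ x : V → S, if g w x = z then ψ x else 0) ∂P)| ≤
      ∫ w, (1 / 2) * ∑ η : {v // v ∈ Λ w} → S,
          |(∑ x : V → S, if (∀ v : {v // v ∈ Λ w}, x v.1 = η v) then φ x else 0) -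
            (∑ x : V → S, if (∀ v : {v // v ∈ Λ w}, x v.1 = η v) then ψ x else 0)| ∂P := by
  classical
  set d : (V → S) → ℝ := fun x => φ x - ψ x with hd
  -- integrability of the z-indexed integrands
  have hint : ∀ (c : (V → S) → ℝ) (z : V → S),
      Integrable (fun w => ∑ x : V → S, if g w x = z then c x else 0) P := by
    intro c z
    have hmeas : Measurable fun w =>
        (fun G : (V → S) → (V → S) => ∑ x : V → S, if G x = z then c x else 0) (g w) :=
      Measurable.comp
        (g := fun G : (V → S) → (V → S) => ∑ x : V → S, if G x = z then c x else 0)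
        measurable_from_top hg
    refine (integrable_const (∑ x : V → S, ‖c x‖)).mono' hmeas.aestronglyMeasurable
      (ae_of_all _ fun w => ?_)
    calc ‖∑ x : V → S, if g w x = z then c x else 0‖
        ≤ ∑ x : V → S, ‖if g w x = z then c x else 0‖ := norm_sum_le _ _
      _ ≤ ∑ x : V → S, ‖c x‖ := Finset.sum_le_sum fun x _ => by split <;> simp
  -- combine the two integrals into one
  have hsub : ∀ z : V → S,
      (∫ w, (∑ x : V → S, if g w x = z then φ x else 0) ∂P) -
        (∫ w, (∑ x : V → S, if g w x = z then ψ x else 0) ∂P) =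
      ∫ w, (∑ x : V → S, if g w x = z then d x else 0) ∂P := by
    intro z
    rw [← integral_sub (hint φ z) (hint ψ z)]
    refine integral_congr_ae (ae_of_all _ fun w => ?_)
    show (∑ x : V → S, if g w x = z then φ x else 0) -
        (∑ x : V → S, if g w x = z then ψ x else 0) =
      ∑ x : V → S, if g w x = z then d x else 0
    rw [← Finset.sum_sub_distrib]
    exact Finset.sum_congr rfl fun x _ => by split <;> simp [hd]
  -- the RHS integrand as a function of Λ w
  set F : Finset V → ℝ := fun L => (1 / 2 : ℝ) * ∑ η : {v // v ∈ L} → S,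
      |(∑ x : V → S, if (∀ v : {v // v ∈ L}, x v.1 = η v) then φ x else 0) -
        (∑ x : V → S, if (∀ v : {v // v ∈ L}, x v.1 = η v) then ψ x else 0)| with hF
  have hFeq : ∀ L : Finset V, F L = (1 / 2 : ℝ) * ∑ η : {v // v ∈ L} → S,
      |∑ x : V → S, if (∀ v : {v // v ∈ L}, x v.1 = η v) then d x else 0| := by
    intro L
    rw [hF]
    refine congrArg _ (Finset.sum_congr rfl fun η _ => ?_)
    rw [← Finset.sum_sub_distrib]
    exact congrArg _ (Finset.sum_congr rfl fun x _ => by split <;> simp [hd])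
  have hFint : Integrable (fun w => F (Λ w)) P := by
    have hmeas : Measurable fun w => F (Λ w) :=
      Measurable.comp (g := F) measurable_from_top hΛ
    refine (integrable_const ((1 / 2 : ℝ) * ∑ x : V → S, |d x|)).mono'
      hmeas.aestronglyMeasurable (ae_of_all _ fun w => ?_)
    rw [hFeq (Λ w), Real.norm_eq_abs, abs_mul, abs_of_nonneg (by norm_num : (0:ℝ) ≤ 1/2),
      abs_of_nonneg (Finset.sum_nonneg fun η _ => abs_nonneg _)]
    exact mul_le_mul_of_nonneg_left (rhs_bound (Λ w) d) (by norm_num)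
  -- rewrite LHS
  have goal2 : (1 / 2 : ℝ) * ∑ z : V → S,
      |∫ w, (∑ x : V → S, if g w x = z then d x else 0) ∂P| ≤ ∫ w, F (Λ w) ∂P := by
    have habs : ∀ z : V → S,
        Integrable (fun w => |∑ x : V → S, if g w x = z then d x else 0|) P :=
      fun z => (hint d z).abs
    calc (1 / 2 : ℝ) * ∑ z : V → S,
          |∫ w, (∑ x : V → S, if g w x = z then d x else 0) ∂P|
        ≤ (1 / 2 : ℝ) * ∑ z : V → S,
          ∫ w, |∑ x : V → S, if g w x = z then d x else 0| ∂P := by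
          refine mul_le_mul_of_nonneg_left (Finset.sum_le_sum fun z _ => ?_) (by norm_num)
          simpa [Real.norm_eq_abs] using
            norm_integral_le_integral_norm (μ := P)
              (f := fun w => ∑ x : V → S, if g w x = z then d x else 0)
      _ = ∫ w, (1 / 2 : ℝ) * ∑ z : V → S,
            |∑ x : V → S, if g w x = z then d x else 0| ∂P := by
          rw [← integral_finset_sum _ fun z _ => habs z, ← integral_const_mul]
      _ ≤ ∫ w, F (Λ w) ∂P := by
          refine integral_mono ?_ hFint fun w => ?_
          · exact (integrable_finset_sum _ fun z _ => habs z).const_mul _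
          · rw [hFeq (Λ w)]
            exact mul_le_mul_of_nonneg_left
              (pointwise (g w) (Λ w) (hsupp w) d) (by norm_num)
  calc (1 / 2 : ℝ) * ∑ z : V → S,
      |(∫ w, (∑ x : V → S, if g w x = z then φ x else 0) ∂P) -
        (∫ w, (∑ x : V → S, if g w x = z then ψ x else 0) ∂P)|
      = (1 / 2 : ℝ) * ∑ z : V → S,
        |∫ w, (∑ x : V → S, if g w x = z then d x else 0) ∂P| := by
        exact congrArg _ (Finset.sum_congr rfl fun z _ => by rw [hsub z])
    _ ≤ ∫ w, F (Λ w) ∂P := goal2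
    _ = _ := rfl
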